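/- Let X be a compact Hausdorff space, E a meet-semilattice with least element ⊥, and D : E → Set X a strongly tight family of domains with D e ≠ ∅ for every e ≠ ⊥. Then the ultracharacter space Ê_∞ (as a subspace of the product space E → Bool) is compact. -/

import Mathlib

/-- A character of a meet-semilattice `E` with least element `⊥`: a map
`ξ : E → Bool` with `ξ (e ⊓ f) = ξ e && ξ f`, `ξ ⊥ = false`, and `ξ e = true`
for at least one `e`. -/
def IsChar {E : Type*} [SemilatticeInf E] [OrderBot E] (ξ : E → Bool) : Prop :=
  (∀ e f : E, ξ (e ⊓ f) = (ξ e && ξ f)) ∧ ξ ⊥ = false ∧ ∃ e : E, ξ e = true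

/-- An ultracharacter: a character maximal in the pointwise order. -/
def IsUltra {E : Type*} [SemilatticeInf E] [OrderBot E] (ξ : E → Bool) : Prop :=
  IsChar ξ ∧ ∀ η : E → Bool, IsChar η → (∀ e, ξ e = true → η e = true) → η = ξ

/-- A strongly tight family of domains on `X` indexed by the meet-semilattice `E`:
`D ⊥ = ∅`, `D (e ⊓ f) = D e ∩ D f`, each `D e` is compact open, and the `D e`
form a basis for the topology of `X`. -/
structure StronglyTightFamily (E X : Type*) [SemilatticeInf E] [OrderBot E]
    [TopologicalSpace X] (D : E → Set X) : Prop where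
  bot_eq : D ⊥ = ∅
  inf_eq : ∀ e f : E, D (e ⊓ f) = D e ∩ D f
  isCompact : ∀ e : E, IsCompact (D e)
  isOpen : ∀ e : E, IsOpen (D e)
  isBasis : TopologicalSpace.IsTopologicalBasis (Set.range D)

/-- Every character has a point lying in all of its domains. -/
lemma char_point {E X : Type*} [SemilatticeInf E] [OrderBot E]
    [TopologicalSpace X] [T2Space X]
    (D : E → Set X) (hD : StronglyTightFamily E X D)
    (hne : ∀ e : E, e ≠ ⊥ → (D e).Nonempty)
    (ξ : E → Bool) (hξ : IsChar ξ) :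
    ∃ x : X, ∀ e : E, ξ e = true → x ∈ D e := by
  obtain ⟨hmul, hbot, e0, he0⟩ := hξ
  have hne' : ∀ e : {e : E // ξ e = true}, (D e.1).Nonempty := by
    rintro ⟨e, he⟩
    apply hne
    rintro rfl
    rw [hbot] at he
    exact Bool.false_ne_true he
  have hdir : Directed (· ⊇ ·) (fun e : {e : E // ξ e = true} => D e.1) := by
    rintro ⟨e, he⟩ ⟨f, hf⟩
    refine ⟨⟨e ⊓ f, by rw [hmul, he, hf]; rfl⟩, ?_, ?_⟩ <;>
      simp only [hD.inf_eq]
    · exact Set.inter_subset_left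
    · exact Set.inter_subset_right
  have : Nonempty {e : E // ξ e = true} := ⟨⟨e0, he0⟩⟩
  obtain ⟨x, hx⟩ := IsCompact.nonempty_iInter_of_directed_nonempty_isCompact_isClosed
    _ hdir hne' (fun e => hD.isCompact e.1) (fun e => (hD.isCompact e.1).isClosed)
  exact ⟨x, fun e he => Set.mem_iInter.mp hx ⟨e, he⟩⟩

/-- if a compact Hausdorff space `X` carries a strongly tight family
of domains with nonempty domains on nonzero elements, then the ultracharacter
space `Ê_∞` (as a subspace of the product `E → Bool`) is compact. -/
theorem ultraChars_compact {E X : Type*} [SemilatticeInf E] [OrderBot E]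
    [TopologicalSpace X] [CompactSpace X] [T2Space X]
    (D : E → Set X) (hD : StronglyTightFamily E X D)
    (hne : ∀ e : E, e ≠ ⊥ → (D e).Nonempty) :
    IsCompact {ξ : E → Bool | IsUltra ξ} := by
  classical
  set φ : X → E → Bool := fun x e => (D e).boolIndicator x with hφdef
  have hmemφ : ∀ (x : X) (e : E), φ x e = true ↔ x ∈ D e :=
    fun x e => ((D e).mem_iff_boolIndicator x).symm
  have hcont : Continuous φ := by
    refine continuous_pi fun e => ?_
    rw [continuous_boolIndicator_iff_isClopen]
    exact ⟨(hD.isCompact e).isClosed, hD.isOpen e⟩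
  have hchar : ∀ x : X, IsChar (φ x) := by
    intro x
    refine ⟨fun e f => ?_, ?_, ?_⟩
    · have h3 := hmemφ x (e ⊓ f)
      rw [hD.inf_eq, Set.mem_inter_iff, ← hmemφ x e, ← hmemφ x f] at h3
      rcases hb1 : φ x e <;> rcases hb2 : φ x f <;> simp_all <;>
        simp_all [Set.boolIndicator, hD.inf_eq]
    · rw [← Bool.not_eq_true, hmemφ, hD.bot_eq]
      exact Set.notMem_empty x
    · obtain ⟨s, ⟨e, rfl⟩, hxe, -⟩ :=
        hD.isBasis.exists_subset_of_mem_open (Set.mem_univ x) isOpen_univ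
      exact ⟨e, (hmemφ x e).mpr hxe⟩
  have hultra : ∀ x : X, IsUltra (φ x) := by
    intro x
    refine ⟨hchar x, fun η hη hle => ?_⟩
    obtain ⟨y, hy⟩ := char_point D hD hne η hη
    have hyx : y = x := by
      by_contra hne'
      obtain ⟨U, V, hU, hV, hxU, hyV, hUV⟩ := t2_separation (Ne.symm hne')
      obtain ⟨s, ⟨e, rfl⟩, hxe, hsub⟩ := hD.isBasis.exists_subset_of_mem_open hxU hU
      have : y ∈ U := hsub (hy e (hle e ((hmemφ x e).mpr hxe)))
      exact hUV.le_bot ⟨this, hyV⟩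
    funext e
    rcases he : η e with _ | _
    · rcases hfe : φ x e with _ | _
      · rfl
      · have h := hle e hfe
        rw [he] at h
        exact h
    · rw [(hmemφ x e).mpr (hyx ▸ hy e he)]
  have key : {ξ : E → Bool | IsUltra ξ} = Set.range φ := by
    ext ξ
    constructor
    · rintro ⟨hc, hmax⟩
      obtain ⟨x, hx⟩ := char_point D hD hne ξ hc
      exact ⟨x, hmax (φ x) (hchar x) (fun e he => (hmemφ x e).mpr (hx e he))⟩
    · rintro ⟨x, rfl⟩
      exact hultra x
  rw [key]
  exact isCompact_range hcont
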